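/- Let a, b be positive real numbers. The FARO loss L(Z, Ẑ) = min over all permutations σ of {1, …, K} of H_G(Z, Ẑ∘σ) is a quasi-metric on binary matrices in {0,1}^{n×K} up to column permutation: (i) L(Z, Ẑ) ≥ 0 for all Z, Ẑ; (ii) L(Z, Ẑ) = 0 if and only if Z = Ẑ∘σ for some permutation σ of {1, …, K}; (iii) L(Z₁, Z₂) + L(Z₂, Z₃) ≥ L(Z₁, Z₃) for all Z₁, Z₂, Z₃ ∈ {0,1}^{n×K}. -/
import Mathlib


/-- The generalized Hamming distance between binary matrices `Z, Ẑ ∈ {0,1}^{n×K}`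
with penalty parameters `a, b`. -/
noncomputable def genHamming {n K : ℕ} (a b : ℝ) (Z Zhat : Fin n → Fin K → Bool) : ℝ :=
  ∑ i : Fin n, ∑ j : Fin K,
    ((if Z i j = true ∧ Zhat i j = false then a else 0) +
     (if Z i j = false ∧ Zhat i j = true then b else 0))

/-- FARO loss: the minimum generalized Hamming distance over all column
permutations of `Ẑ`. -/
noncomputable def faroLoss {n K : ℕ} (a b : ℝ) (Z Zhat : Fin n → Fin K → Bool) : ℝ :=
  Finset.univ.inf' Finset.univ_nonempty
    fun σ : Equiv.Perm (Fin K) => genHamming a b Z (fun i j => Zhat i (σ j))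

lemma genHamming_nonneg {n K : ℕ} {a b : ℝ} (ha : 0 ≤ a) (hb : 0 ≤ b)
    (Z W : Fin n → Fin K → Bool) : 0 ≤ genHamming a b Z W := by
  apply Finset.sum_nonneg; intro i _
  apply Finset.sum_nonneg; intro j _
  have : (0:ℝ) ≤ (if Z i j = true ∧ W i j = false then a else 0) := by positivity
  have : (0:ℝ) ≤ (if Z i j = false ∧ W i j = true then b else 0) := by positivity
  linarith [ite_le_sup a 0 (Z i j = true ∧ W i j = false)]

lemma genHamming_eq_zero {n K : ℕ} {a b : ℝ} (ha : 0 < a) (hb : 0 < b)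
    {Z W : Fin n → Fin K → Bool} (h : genHamming a b Z W = 0) : Z = W := by
  have hterm : ∀ i j, ((if Z i j = true ∧ W i j = false then a else 0) +
      (if Z i j = false ∧ W i j = true then b else 0)) = 0 := by
    intro i j
    have h1 : ∀ i : Fin n, (∑ j : Fin K,
        ((if Z i j = true ∧ W i j = false then a else 0) +
         (if Z i j = false ∧ W i j = true then b else 0))) = 0 := by
      have := (Finset.sum_eq_zero_iff_of_nonneg (fun i _ => by
        apply Finset.sum_nonneg; intro j _
        have h2 : (0:ℝ) ≤ (if Z i j = true ∧ W i j = false then a else 0) := by positivity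
        have h3 : (0:ℝ) ≤ (if Z i j = false ∧ W i j = true then b else 0) := by positivity
        linarith)).mp h
      intro i; exact this i (Finset.mem_univ i)
    have := (Finset.sum_eq_zero_iff_of_nonneg (fun j _ => by
        have h2 : (0:ℝ) ≤ (if Z i j = true ∧ W i j = false then a else 0) := by positivity
        have h3 : (0:ℝ) ≤ (if Z i j = false ∧ W i j = true then b else 0) := by positivity
        linarith)).mp (h1 i)
    exact this j (Finset.mem_univ j)
  funext i j
  have := hterm i j
  cases hz : Z i j <;> cases hw : W i j <;> simp_all

lemma genHamming_triangle {n K : ℕ} {a b : ℝ} (ha : 0 < a) (hb : 0 < b)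
    (X Y Z : Fin n → Fin K → Bool) :
    genHamming a b X Z ≤ genHamming a b X Y + genHamming a b Y Z := by
  unfold genHamming
  rw [← Finset.sum_add_distrib]
  apply Finset.sum_le_sum; intro i _
  rw [← Finset.sum_add_distrib]
  apply Finset.sum_le_sum; intro j _
  cases hx : X i j <;> cases hy : Y i j <;> cases hz : Z i j <;> simp <;> linarith

/-- FARO loss is a quasi-metric on binary matrices up to column permutation:
it is nonnegative, vanishes exactly when the two matrices agree up to a column
permutation, and satisfies the triangle inequality. -/
theorem faroLoss_quasiMetric {n K : ℕ} (a b : ℝ) (ha : 0 < a) (hb : 0 < b) :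
    (∀ Z Zhat : Fin n → Fin K → Bool, 0 ≤ faroLoss a b Z Zhat) ∧
    (∀ Z Zhat : Fin n → Fin K → Bool,
      faroLoss a b Z Zhat = 0 ↔ ∃ σ : Equiv.Perm (Fin K), Z = fun i j => Zhat i (σ j)) ∧
    (∀ Z₁ Z₂ Z₃ : Fin n → Fin K → Bool,
      faroLoss a b Z₁ Z₃ ≤ faroLoss a b Z₁ Z₂ + faroLoss a b Z₂ Z₃) := by
  have hnonneg : ∀ Z Zhat : Fin n → Fin K → Bool, 0 ≤ faroLoss a b Z Zhat := by
    intro Z Zhat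
    apply Finset.le_inf'
    intro σ _
    exact genHamming_nonneg ha.le hb.le _ _
  refine ⟨hnonneg, ?_, ?_⟩
  · intro Z Zhat
    constructor
    · intro h
      obtain ⟨σ, _, hσ⟩ := Finset.exists_mem_eq_inf' (Finset.univ_nonempty)
        (fun σ : Equiv.Perm (Fin K) => genHamming a b Z (fun i j => Zhat i (σ j)))
      rw [faroLoss, hσ] at h
      exact ⟨σ, genHamming_eq_zero ha hb h⟩
    · rintro ⟨σ, rfl⟩
      have h1 : faroLoss a b (fun i j => Zhat i (σ j)) Zhat ≤
          genHamming a b (fun i j => Zhat i (σ j)) (fun i j => Zhat i (σ j)) :=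
        Finset.inf'_le _ (Finset.mem_univ σ)
      have h2 : genHamming a b (fun i j => Zhat i (σ j)) (fun i j => Zhat i (σ j)) = 0 := by
        unfold genHamming; simp
      exact le_antisymm (h2 ▸ h1) (hnonneg _ _)
  · intro Z₁ Z₂ Z₃
    obtain ⟨σ, _, hσ⟩ := Finset.exists_mem_eq_inf' (Finset.univ_nonempty)
      (fun σ : Equiv.Perm (Fin K) => genHamming a b Z₁ (fun i j => Z₂ i (σ j)))
    obtain ⟨τ, _, hτ⟩ := Finset.exists_mem_eq_inf' (Finset.univ_nonempty)
      (fun τ : Equiv.Perm (Fin K) => genHamming a b Z₂ (fun i j => Z₃ i (τ j)))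
    rw [show faroLoss a b Z₁ Z₂ = _ from hσ, show faroLoss a b Z₂ Z₃ = _ from hτ]
    have hle : faroLoss a b Z₁ Z₃ ≤
        genHamming a b Z₁ (fun i j => Z₃ i (τ (σ j))) :=
      Finset.inf'_le _ (Finset.mem_univ (σ.trans τ))
    have htri := genHamming_triangle ha hb Z₁ (fun i j => Z₂ i (σ j))
      (fun i j => Z₃ i (τ (σ j)))
    have hre : genHamming a b (fun i j => Z₂ i (σ j)) (fun i j => Z₃ i (τ (σ j))) =
        genHamming a b Z₂ (fun i j => Z₃ i (τ j)) := by
      unfold genHamming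
      apply Finset.sum_congr rfl
      intro i _
      exact Fintype.sum_equiv σ _ _ (fun j => rfl)
    linarith
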